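/- For the IMQ-RBF interpolant r(x) = λ_0/√(1+ε²(x−x_0)²) + λ_1/√(1+ε²(x−x_1)²) satisfying r(x_0)=u_0, r(x_1)=u_1 with x_1 = x_0 + h, h>0, ε>0, the derivative at x_0 equals r'(x_0) = (u_1√(1+ε²h²) − u_0)/((1+ε²h²)h). -/

import Mathlib

lemma imq_aux (lam c ε y : ℝ) :
    HasDerivAt (fun x => lam / Real.sqrt (1 + ε^2 * (x - c)^2))
      (-(lam * ε^2 * (y - c)) / ((1 + ε^2 * (y - c)^2) * Real.sqrt (1 + ε^2 * (y - c)^2))) y := by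
  have pos : 0 < 1 + ε^2 * (y - c)^2 := by positivity
  have hg : HasDerivAt (fun x => 1 + ε^2 * (x - c)^2) (ε^2 * (2 * (y - c))) y := by
    have h1 := (((hasDerivAt_id y).sub_const c).pow 2).const_mul (ε^2)
    have h2 := h1.const_add 1
    refine h2.congr_deriv (Eq.symm ?_)
    simp [id]
  have hsqrt := hg.sqrt pos.ne'
  have hsne : Real.sqrt (1 + ε^2 * (y - c)^2) ≠ 0 := (Real.sqrt_pos.mpr pos).ne'
  have hd := (hasDerivAt_const y lam).div hsqrt hsne
  refine hd.congr_deriv (Eq.symm ?_)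
  have hsq : Real.sqrt (1 + ε^2 * (y - c)^2) ^ 2 = 1 + ε^2 * (y - c)^2 :=
    Real.sq_sqrt pos.le
  field_simp
  linear_combination lam * ε^2 * (c - y) * hsq

theorem imq_interpolant_deriv_at_left (x0 h ε u0 u1 lam0 lam1 : ℝ)
    (hh : 0 < h) (hε : 0 < ε)
    (r : ℝ → ℝ)
    (hr : r = fun x => lam0 / Real.sqrt (1 + ε^2 * (x - x0)^2) +
                       lam1 / Real.sqrt (1 + ε^2 * (x - (x0 + h))^2))
    (h0 : r x0 = u0) (h1 : r (x0 + h) = u1) :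
    HasDerivAt r ((u1 * Real.sqrt (1 + ε^2 * h^2) - u0) / ((1 + ε^2 * h^2) * h)) x0 := by
  subst hr
  set s := Real.sqrt (1 + ε^2 * h^2) with hs
  have posd : 0 < 1 + ε^2 * h^2 := by positivity
  have hspos : 0 < s := Real.sqrt_pos.mpr posd
  have hs2 : s ^ 2 = 1 + ε^2 * h^2 := Real.sq_sqrt posd.le
  have e0 : lam0 + lam1 / s = u0 := by
    simpa [sub_add_eq_sub_sub, show x0 - x0 - h = -h by ring, neg_sq] using h0
  have e1 : lam0 / s + lam1 = u1 := by
    simpa [add_sub_cancel_left, show x0 + h - (x0 + h) = 0 by ring] using h1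
  have hne : s ≠ 0 := hspos.ne'
  field_simp at e0 e1
  have key : lam1 * (ε^2 * h^2) = u1 * (1 + ε^2 * h^2) - u0 * s := by
    linear_combination s * e1 - e0 + (u1 - lam1) * hs2
  have hsum := (imq_aux lam0 x0 ε x0).add (imq_aux lam1 (x0 + h) ε x0)
  refine hsum.congr_deriv (Eq.symm ?_)
  rw [show x0 - (x0 + h) = -h by ring, sub_self]
  rw [show (1:ℝ) + ε^2 * (-h)^2 = 1 + ε^2 * h^2 by ring]
  simp only [mul_zero, neg_zero, zero_div, zero_add]
  rw [div_eq_div_iff (by positivity) (by positivity)]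
  linear_combination (1 + ε^2*h^2) * key.symm + u1 * (1 + ε^2*h^2) * hs2
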